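/- Let N(x) := ∫_{-∞}^x (2π)^{-1/2} exp(−y²/2) dy be the standard normal distribution function. Fix r < 0, μ > 0 and T > 0, and define F(v) := N(−(r+μT)v/√T) − exp(−2μrv²)·N(−(r−μT)v/√T). Then for every σ̄ > 0 with σ̄ ≠ 1: F(1/|1−σ̄|) < F(1/(1+σ̄)). -/
import Mathlib


open MeasureTheory

/-- The standard normal density `n(x) = (2π)^{-1/2} exp(-x²/2)`. -/
noncomputable def stdGaussPDF (x : ℝ) : ℝ :=
  (Real.sqrt (2 * Real.pi))⁻¹ * Real.exp (-x ^ 2 / 2)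

/-- The standard normal distribution function `N(x) = ∫_{-∞}^x n(y) dy`. -/
noncomputable def stdGaussCDF (x : ℝ) : ℝ :=
  ∫ y in Set.Iic x, stdGaussPDF y


lemma stdGaussPDF_pos (x : ℝ) : 0 < stdGaussPDF x := by
  unfold stdGaussPDF
  positivity

lemma stdGaussPDF_continuous : Continuous stdGaussPDF := by
  unfold stdGaussPDF
  continuity

lemma stdGaussPDF_integrable : Integrable stdGaussPDF := by
  have h : Integrable (fun x : ℝ => Real.exp (-(1/2) * x ^ 2)) :=
    integrable_exp_neg_mul_sq (by norm_num)
  have := h.const_mul (Real.sqrt (2 * Real.pi))⁻¹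
  refine this.congr ?_
  filter_upwards with x
  unfold stdGaussPDF
  ring_nf

lemma stdGaussCDF_nonneg (x : ℝ) : 0 ≤ stdGaussCDF x := by
  unfold stdGaussCDF
  exact setIntegral_nonneg measurableSet_Iic fun y _ => (stdGaussPDF_pos y).le

lemma hasDerivAt_stdGaussCDF (x : ℝ) : HasDerivAt stdGaussCDF (stdGaussPDF x) x := by
  have hint : ∀ y : ℝ, IntervalIntegrable stdGaussPDF volume 0 y :=
    fun y => stdGaussPDF_continuous.intervalIntegrable 0 y
  have h : HasDerivAt (fun u => ∫ t in (0:ℝ)..u, stdGaussPDF t) (stdGaussPDF x) x :=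
    intervalIntegral.integral_hasDerivAt_right (hint x)
      (stdGaussPDF_continuous.stronglyMeasurableAtFilter _ _)
      stdGaussPDF_continuous.continuousAt
  have heq : ∀ y : ℝ, stdGaussCDF y = stdGaussCDF 0 + ∫ t in (0:ℝ)..y, stdGaussPDF t := by
    intro y
    unfold stdGaussCDF
    rw [← intervalIntegral.integral_Iic_sub_Iic (stdGaussPDF_integrable.integrableOn)
      (stdGaussPDF_integrable.integrableOn)]
    ring
  have : HasDerivAt (fun y => stdGaussCDF 0 + ∫ t in (0:ℝ)..y, stdGaussPDF t)
      (stdGaussPDF x) x := (h.const_add _)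
  exact this.congr_of_eventuallyEq (Filter.Eventually.of_forall fun y => (heq y))

/-- with `r < 0`, `μ > 0`, `T > 0` and
`F(v) = N(−(r+μT)v/√T) − exp(−2μrv²) N(−(r−μT)v/√T)`, for every `σ̄ > 0` with
`σ̄ ≠ 1` one has `F(1/|1−σ̄|) < F(1/(1+σ̄))`. -/
theorem stmt_13 (r μ T : ℝ) (hr : r < 0) (hμ : 0 < μ) (hT : 0 < T) (F : ℝ → ℝ)
    (hF : ∀ v, F v =
      stdGaussCDF (-(r + μ * T) * v / Real.sqrt T)
        - Real.exp (-2 * μ * r * v ^ 2) * stdGaussCDF (-(r - μ * T) * v / Real.sqrt T)) :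
    ∀ σ : ℝ, 0 < σ → σ ≠ 1 → F (1 / |1 - σ|) < F (1 / (1 + σ)) := by
  have hFfun : F = fun v => stdGaussCDF (-(r + μ * T) * v / Real.sqrt T)
      - Real.exp (-2 * μ * r * v ^ 2) * stdGaussCDF (-(r - μ * T) * v / Real.sqrt T) :=
    funext hF
  set s := Real.sqrt T with hs_def
  have hs : 0 < s := Real.sqrt_pos.mpr hT
  have hs2 : s ^ 2 = T := Real.sq_sqrt hT.le
  -- derivative of F at every point
  have hderiv : ∀ v : ℝ, HasDerivAt F
      (stdGaussPDF (-(r + μ * T) * v / s) * (-(r + μ * T) / s)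
        - (Real.exp (-2 * μ * r * v ^ 2) * (-2 * μ * r * (2 * v)) * stdGaussCDF (-(r - μ * T) * v / s)
          + Real.exp (-2 * μ * r * v ^ 2) * (stdGaussPDF (-(r - μ * T) * v / s) * (-(r - μ * T) / s)))) v := by
    intro v
    have inner1 : HasDerivAt (fun v : ℝ => -(r + μ * T) * v / s) (-(r + μ * T) / s) v := by
      simpa using ((hasDerivAt_id v).const_mul (-(r + μ * T))).div_const s
    have inner2 : HasDerivAt (fun v : ℝ => -(r - μ * T) * v / s) (-(r - μ * T) / s) v := by
      simpa using ((hasDerivAt_id v).const_mul (-(r - μ * T))).div_const s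
    have h1 : HasDerivAt (fun v : ℝ => stdGaussCDF (-(r + μ * T) * v / s))
        (stdGaussPDF (-(r + μ * T) * v / s) * (-(r + μ * T) / s)) v :=
      (hasDerivAt_stdGaussCDF _).comp v inner1
    have h3 : HasDerivAt (fun v : ℝ => stdGaussCDF (-(r - μ * T) * v / s))
        (stdGaussPDF (-(r - μ * T) * v / s) * (-(r - μ * T) / s)) v :=
      (hasDerivAt_stdGaussCDF _).comp v inner2
    have hpow : HasDerivAt (fun v : ℝ => -2 * μ * r * v ^ 2) (-2 * μ * r * (2 * v)) v := by
      simpa using (hasDerivAt_pow 2 v).const_mul (-2 * μ * r)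
    have h2 : HasDerivAt (fun v : ℝ => Real.exp (-2 * μ * r * v ^ 2))
        (Real.exp (-2 * μ * r * v ^ 2) * (-2 * μ * r * (2 * v))) v := hpow.exp
    rw [hFfun]
    exact h1.sub (h2.mul h3)
  -- F is strictly decreasing on (0, ∞)
  have hanti : StrictAntiOn F (Set.Ioi (0 : ℝ)) := by
    apply strictAntiOn_of_deriv_neg (convex_Ioi 0)
    · exact fun x _ => ((hderiv x).differentiableAt.continuousAt).continuousWithinAt
    · intro v hv
      rw [interior_Ioi] at hv
      rw [(hderiv v).deriv]
      set E := Real.exp (-2 * μ * r * v ^ 2) with hE_def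
      have hE : 0 < E := Real.exp_pos _
      have key : E * stdGaussPDF (-(r - μ * T) * v / s) = stdGaussPDF (-(r + μ * T) * v / s) := by
        unfold stdGaussPDF
        rw [mul_comm E, mul_assoc, ← Real.exp_add]
        congr 1
        rw [div_pow, div_pow, hs2]
        field_simp
        ring
      have hNB : 0 ≤ stdGaussCDF (-(r - μ * T) * v / s) := stdGaussCDF_nonneg _
      have hPA : 0 < stdGaussPDF (-(r + μ * T) * v / s) := stdGaussPDF_pos _
      have hrw : stdGaussPDF (-(r + μ * T) * v / s) * (-(r + μ * T) / s)
          - (E * (-2 * μ * r * (2 * v)) * stdGaussCDF (-(r - μ * T) * v / s)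
            + E * (stdGaussPDF (-(r - μ * T) * v / s) * (-(r - μ * T) / s)))
          = stdGaussPDF (-(r + μ * T) * v / s) * (-2 * μ * T / s)
            + (4 * μ * r * v * E) * stdGaussCDF (-(r - μ * T) * v / s) := by
        linear_combination ((r - μ * T) / s) * key
      rw [hrw]
      have t1 : stdGaussPDF (-(r + μ * T) * v / s) * (-2 * μ * T / s) < 0 := by
        apply mul_neg_of_pos_of_neg hPA
        apply div_neg_of_neg_of_pos _ hs
        nlinarith
      have t2 : (4 * μ * r * v * E) * stdGaussCDF (-(r - μ * T) * v / s) ≤ 0 := by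
        have hv0 : 0 < v := Set.mem_Ioi.mp hv
        apply mul_nonpos_of_nonpos_of_nonneg _ hNB
        nlinarith [mul_neg_of_neg_of_pos hr (mul_pos (mul_pos hμ hv0) hE)]
      linarith
  -- conclude
  intro σ hσ hσ1
  have habs : 0 < |1 - σ| := abs_pos.mpr (by intro h; apply hσ1; linarith)
  have hlt : |1 - σ| < 1 + σ := by
    rw [abs_lt]; constructor <;> linarith
  have hx : (0 : ℝ) < 1 / (1 + σ) := by positivity
  have hy : (0 : ℝ) < 1 / |1 - σ| := by positivity
  have hxy : 1 / (1 + σ) < 1 / |1 - σ| := by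
    apply one_div_lt_one_div_of_lt habs hlt
  exact hanti hx hy hxy
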